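/- Let K be a positive definite multi-Toeplitz kernel on F_N^+ with K(∅,∅) = 1, let n ≥ 1, and let K_n be the I_n × I_n matrix with entries (K_n)_{σ,τ} = K(σ,τ). Define p, q : I_n → ℂ by p(∅) = 1, p(σ) = conj(K(∅,σ)) for σ ≠ ∅, q(∅) = 0, q(σ) = conj(K(∅,σ)) for σ ≠ ∅. Then K_n − Σ_{k=1}^N C_{k,n} K_n C_{k,n}ᴴ equals the I_n × I_n matrix whose (σ,τ) entry is p(σ)·conj(p(τ)) − q(σ)·conj(q(τ)) (here ᴴ denotes the conjugate transpose). -/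

import Mathlib

open scoped ComplexOrder Matrix

noncomputable section

/-- Words over the alphabet `{1,…,N}`: the free monoid `F_N^+` (the empty list is `∅`,
`++` is concatenation). -/
abbrev Word (N : ℕ) := List (Fin N)

/-- `I_n = {σ ∈ F_N^+ : |σ| ≤ n}`, a finite set. -/
abbrev In (N n : ℕ) := {σ : Word N // σ.length ≤ n}

instance {N n : ℕ} : Fintype (In N n) := (List.finite_length_le (Fin N) n).fintype

/-- The `I_n × I_n` matrix `C_{k,n}` with entries `1` at `(kτ, τ)` and `0` elsewhere. -/
def Cmat {N n : ℕ} (k : Fin N) : Matrix (In N n) (In N n) ℂ :=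
  Matrix.of fun σ τ => if σ.1 = k :: τ.1 then 1 else 0

/-- For `x : I_n → ℂ`, the matrix `U(x)` with `U(x)_{σ,τ} = x(τ')` if `τ = στ'` and `0`
otherwise. -/
def Umat {N n : ℕ} (x : In N n → ℂ) : Matrix (In N n) (In N n) ℂ :=
  Matrix.of fun σ τ =>
    if h : σ.1 <+: τ.1 then
      x ⟨τ.1.drop σ.1.length, by rw [List.length_drop]; exact le_trans (Nat.sub_le _ _) τ.2⟩
    else 0

/-- `K` is a positive definite kernel on `F_N^+`. -/
def PosDefKernel {N : ℕ} (K : Word N → Word N → ℂ) : Prop :=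
  ∀ (m : ℕ) (σ : Fin m → Word N) (c : Fin m → ℂ),
    0 ≤ ∑ i, ∑ j, K (σ i) (σ j) * c j * (starRingEnd ℂ) (c i)

/-- `K` is invariant under the action of `F_N^+` on itself by juxtaposition. -/
def InvariantKernel {N : ℕ} (K : Word N → Word N → ℂ) : Prop :=
  ∀ τ σ σ' : Word N, K (τ ++ σ) (τ ++ σ') = K σ σ'

/-- `K` is a (positive definite) multi-Toeplitz kernel on `F_N^+`. -/
def MultiToeplitz {N : ℕ} (K : Word N → Word N → ℂ) : Prop :=
  InvariantKernel K ∧ PosDefKernel K ∧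
    ∀ σ τ : Word N, (∀ α : Word N, σ ≠ α ++ τ ∧ τ ≠ α ++ σ) → K σ τ = 0

/-- Displacement equation for the truncation `K_n` of a positive definite
multi-Toeplitz kernel `K` with `K(∅,∅) = 1`:
`K_n − ∑ₖ C_{k,n} K_n C_{k,n}ᴴ = [p(σ)·conj(p(τ)) − q(σ)·conj(q(τ))]_{σ,τ}`. -/
lemma kernel_hermitian {N : ℕ} {K : Word N → Word N → ℂ} (h : PosDefKernel K) (σ τ : Word N) :
    K σ τ = (starRingEnd ℂ) (K τ σ) := by
  have H : ∀ c₀ c₁ : ℂ,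
      (K σ σ * c₀ * (starRingEnd ℂ) c₀ + K σ τ * c₁ * (starRingEnd ℂ) c₀
        + (K τ σ * c₀ * (starRingEnd ℂ) c₁ + K τ τ * c₁ * (starRingEnd ℂ) c₁)).im = 0 := by
    intro c₀ c₁
    have h2 := h 2 ![σ, τ] ![c₀, c₁]
    simp only [Fin.sum_univ_two, Matrix.cons_val_zero, Matrix.cons_val_one, Matrix.head_cons] at h2
    exact ((Complex.le_def.mp h2).2).symm
  have h10 := H 1 0
  have h01 := H 0 1
  have h11 := H 1 1
  have h1I := H 1 Complex.I
  simp [Complex.ext_iff, Complex.add_im, Complex.mul_im] at h10 h01 h11 h1I ⊢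
  constructor <;> linarith [h10, h01, h11, h1I]

lemma not_comparable {N : ℕ} {x y : Fin N} (hxy : x ≠ y) {xs ys : Word N}
    (hlen : xs.length ≤ ys.length) (α : Word N) :
    List.replicate (ys.length+1) x ++ (x::xs) ≠ α ++ (List.replicate (ys.length+1) x ++ (y::ys))
  ∧ List.replicate (ys.length+1) x ++ (y::ys) ≠ α ++ (List.replicate (ys.length+1) x ++ (x::xs)) := by
  set m := ys.length + 1 with hm
  constructor
  · intro h
    have hl := congrArg List.length h
    simp only [List.length_append, List.length_replicate, List.length_cons] at hl
    have hα : α.length = 0 ∧ xs.length = ys.length := by omega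
    have hα0 : α = [] := List.length_eq_zero_iff.mp hα.1
    subst hα0
    simp only [List.nil_append] at h
    have h2 := List.append_cancel_left h
    exact hxy (by injection h2)
  · intro h
    have hl := congrArg List.length h
    simp only [List.length_append, List.length_replicate, List.length_cons] at hl
    rcases Nat.eq_zero_or_pos α.length with h0 | hpos
    · have hα0 : α = [] := List.length_eq_zero_iff.mp h0
      subst hα0
      simp only [List.nil_append] at h
      have h2 := List.append_cancel_left h
      exact hxy.symm (by injection h2)
    · have e := congrArg (fun l : List (Fin N) => l[m]?) h
      rw [List.getElem?_append_right (by simp), List.getElem?_append_right (by omega)] at e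
      simp only [List.length_replicate, Nat.sub_self, List.getElem?_cons_zero] at e
      rw [List.getElem?_append_left (by simp; omega), List.getElem?_replicate] at e
      rw [if_pos (by omega)] at e
      exact hxy.symm (by injection e)

lemma head_ne_zero {N : ℕ} {K : Word N → Word N → ℂ} (hK : MultiToeplitz K)
    {x y : Fin N} (hxy : x ≠ y) (xs ys : Word N) : K (x::xs) (y::ys) = 0 := by
  obtain ⟨hinv, -, hzero⟩ := hK
  rcases le_or_gt xs.length ys.length with hle | hlt
  · have h0 := hzero (List.replicate (ys.length+1) x ++ (x::xs))
      (List.replicate (ys.length+1) x ++ (y::ys)) (fun α => not_comparable hxy hle α)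
    rwa [hinv] at h0
  · have h0 := hzero (List.replicate (xs.length+1) y ++ (x::xs))
      (List.replicate (xs.length+1) y ++ (y::ys))
      (fun α => ⟨(not_comparable hxy.symm hlt.le α).2, (not_comparable hxy.symm hlt.le α).1⟩)
    rwa [hinv] at h0

theorem truncated_multiToeplitz_displacement {N n : ℕ} (hN : 1 ≤ N) (hn : 1 ≤ n)
    (K : Word N → Word N → ℂ) (hK : MultiToeplitz K) (hK1 : K [] [] = 1)
    (p q : In N n → ℂ)
    (hp0 : p ⟨[], Nat.zero_le n⟩ = 1)
    (hp : ∀ σ : In N n, σ.1 ≠ [] → p σ = (starRingEnd ℂ) (K [] σ.1))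
    (hq0 : q ⟨[], Nat.zero_le n⟩ = 0)
    (hq : ∀ σ : In N n, σ.1 ≠ [] → q σ = (starRingEnd ℂ) (K [] σ.1)) :
    (Matrix.of fun σ τ : In N n => K σ.1 τ.1)
        - ∑ k : Fin N, Cmat k * (Matrix.of fun σ τ : In N n => K σ.1 τ.1) * (Cmat k)ᴴ
      = Matrix.of fun σ τ : In N n =>
          p σ * (starRingEnd ℂ) (p τ) - q σ * (starRingEnd ℂ) (q τ) := by
  have hinv := hK.1
  have herm := kernel_hermitian hK.2.1
  ext σ τ
  obtain ⟨s, hs⟩ := σ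
  obtain ⟨t, ht⟩ := τ
  simp only [Matrix.sub_apply, Matrix.of_apply, Matrix.sum_apply]
  match s, t with
  | [], [] =>
      have e0 : (⟨[], hs⟩ : In N n) = ⟨[], Nat.zero_le n⟩ := rfl
      have e1 : (⟨[], ht⟩ : In N n) = ⟨[], Nat.zero_le n⟩ := rfl
      rw [e0, e1, hp0, hq0]
      have hsum : ∀ k : Fin N,
          ((Cmat k * (Matrix.of fun σ τ : In N n => K σ.1 τ.1) * (Cmat k)ᴴ :
            Matrix (In N n) (In N n) ℂ))
            ⟨[], Nat.zero_le n⟩ ⟨[], Nat.zero_le n⟩ = 0 := by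
        intro k
        simp [Matrix.mul_apply, Cmat]
      simp [hsum, hK1]
  | [], (y::ys) =>
      have e0 : (⟨[], hs⟩ : In N n) = ⟨[], Nat.zero_le n⟩ := rfl
      rw [e0, hp0, hq0]
      rw [hp ⟨y::ys, ht⟩ (by simp), hq ⟨y::ys, ht⟩ (by simp)]
      have hsum : ∀ k : Fin N,
          ((Cmat k * (Matrix.of fun σ τ : In N n => K σ.1 τ.1) * (Cmat k)ᴴ :
            Matrix (In N n) (In N n) ℂ))
            ⟨[], Nat.zero_le n⟩ ⟨y::ys, ht⟩ = 0 := by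
        intro k
        simp [Matrix.mul_apply, Cmat]
      simp [hsum]
  | (x::xs), [] =>
      have e1 : (⟨[], ht⟩ : In N n) = ⟨[], Nat.zero_le n⟩ := rfl
      rw [e1, hp0, hq0]
      rw [hp ⟨x::xs, hs⟩ (by simp), hq ⟨x::xs, hs⟩ (by simp)]
      have hsum : ∀ k : Fin N,
          ((Cmat k * (Matrix.of fun σ τ : In N n => K σ.1 τ.1) * (Cmat k)ᴴ :
            Matrix (In N n) (In N n) ℂ))
            ⟨x::xs, hs⟩ ⟨[], Nat.zero_le n⟩ = 0 := by
        intro k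
        simp [Matrix.mul_apply, Cmat]
      simp [hsum, herm (x::xs) []]
  | (x::xs), (y::ys) =>
      have hxs : xs.length ≤ n := le_trans (Nat.le_succ _) hs
      have hys : ys.length ≤ n := le_trans (Nat.le_succ _) ht
      set σ' : In N n := ⟨xs, hxs⟩ with hσ'
      set τ' : In N n := ⟨ys, hys⟩ with hτ'
      have cond1 : ∀ (k : Fin N) (α : In N n),
          ((x::xs : Word N) = k :: α.1) ↔ (k = x ∧ α = σ') := by
        intro k α
        constructor
        · intro h
          injection h with h1 h2
          exact ⟨h1.symm, Subtype.ext h2.symm⟩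
        · rintro ⟨rfl, rfl⟩; rfl
      have cond2 : ∀ (k : Fin N) (β : In N n),
          ((y::ys : Word N) = k :: β.1) ↔ (k = y ∧ β = τ') := by
        intro k β
        constructor
        · intro h
          injection h with h1 h2
          exact ⟨h1.symm, Subtype.ext h2.symm⟩
        · rintro ⟨rfl, rfl⟩; rfl
      have hsum : ∀ k : Fin N,
          ((Cmat k * (Matrix.of fun σ τ : In N n => K σ.1 τ.1) * (Cmat k)ᴴ :
            Matrix (In N n) (In N n) ℂ))
            ⟨x::xs, hs⟩ ⟨y::ys, ht⟩ = if k = x ∧ k = y then K xs ys else 0 := by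
        intro k
        simp only [Matrix.mul_apply, Matrix.conjTranspose_apply, Cmat, Matrix.of_apply,
          cond1, cond2, Finset.sum_mul, apply_ite (starRingEnd ℂ), map_one, map_zero, ite_and, ite_mul,
          mul_ite, one_mul, zero_mul, mul_one, mul_zero]
        by_cases hkx : k = x <;> by_cases hky : k = y
        · have hxy : x = y := hkx.symm.trans hky
          simp [hkx, hky, hxy, Finset.sum_ite_eq', apply_ite (starRingEnd ℂ),
            mul_ite, mul_one, mul_zero, hσ', hτ']
        · have hxy : ¬ x = y := fun h => hky (hkx.trans h)
          simp [hkx, hky, hxy]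
        · have hxy : ¬ x = y := fun h => hkx (hky.trans h.symm)
          simp [hkx, hky, hxy, Ne.symm hxy]
        · simp [hkx, hky]
      rw [hp ⟨x::xs, hs⟩ (by simp), hq ⟨x::xs, hs⟩ (by simp),
        hp ⟨y::ys, ht⟩ (by simp), hq ⟨y::ys, ht⟩ (by simp)]
      rw [Finset.sum_congr rfl (fun k _ => hsum k)]
      by_cases hxy : x = y
      · subst hxy
        have : K (x::xs) (x::ys) = K xs ys := hinv [x] xs ys
        simp [Finset.sum_ite_eq', this]
      · have hz : K (x::xs) (y::ys) = 0 := head_ne_zero hK hxy xs ys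
        have : ∀ k : Fin N, ¬(k = x ∧ k = y) := by
          rintro k ⟨rfl, rfl⟩; exact hxy rfl
        simp [this, hz]
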